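/- arXiv:0709.4022 — 3 statements merged into one kernel-verified Lean document; each statement's English description precedes it below -/
import Mathlib

section
/- Let H be a non-negative self-adjoint operator on a Hilbert space with eigenvalues 0 ≤ E_1 ≤ E_2 ≤ ... and corresponding orthonormal eigenvectors ψ_1, ψ_2, .... Let f_1, ..., f_k be orthonormal vectors with ⟨f_i, H f_i⟩ ≤ η E_i for some η > 1. If E_{k+1} > E_k, then ∑_{i=1}^k ∑_{j=1}^k |⟨f_i, ψ_j⟩|² ≥ k − (η − 1)(∑_{i=1}^k E_i)/(E_{k+1} − E_k). -/
open scoped BigOperators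

private lemma sum_fin_split {N k : ℕ} (h : k ≤ N) (hk : 0 < k) (F : Fin N → ℝ) :
    ∑ j : Fin N, F j =
      (∑ j : Fin k, F (Fin.castLE h j)) +
        ∑ j ∈ Finset.univ.filter (fun j : Fin N => ¬ ((j : ℕ) < k)), F j := by
  rw [← Finset.sum_filter_add_sum_filter_not Finset.univ (fun j : Fin N => (j : ℕ) < k) F]
  congr 1
  refine Finset.sum_nbij' (fun a : Fin N => (⟨(a : ℕ) % k, Nat.mod_lt _ hk⟩ : Fin k))
    (fun a : Fin k => Fin.castLE h a) (fun a _ => Finset.mem_univ _) ?_ ?_ ?_ ?_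
  · intro a _
    simp only [Finset.mem_filter, Finset.mem_univ, true_and, Fin.coe_castLE]
    exact a.isLt
  · intro a ha
    simp only [Finset.mem_filter, Finset.mem_univ, true_and] at ha
    ext
    simp [Nat.mod_eq_of_lt ha]
  · intro a _
    ext
    simp [Nat.mod_eq_of_lt a.isLt]
  · intro a ha
    simp only [Finset.mem_filter, Finset.mem_univ, true_and] at ha
    congr 1
    ext
    simp [Nat.mod_eq_of_lt ha]

/-- Lemma 2 of Seiringer–Yin: if `f 1, …, f k` are orthonormal trial vectors with
`⟨f i, H f i⟩ ≤ η E_i` for some `η > 1`, and `E_{k+1} > E_k`, then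
`∑_{i,j=1}^k |⟨f i, ψ j⟩|² ≥ k - (η-1)(∑_{i=1}^k E_i)/(E_{k+1} - E_k)`. -/
theorem lemma2_eigenfunction_overlap {N : ℕ}
    (H : EuclideanSpace ℂ (Fin N) →ₗ[ℂ] EuclideanSpace ℂ (Fin N))
    (hsym : ∀ x y : EuclideanSpace ℂ (Fin N), (inner ℂ (H x) y : ℂ) = inner ℂ x (H y))
    (hpos : ∀ x : EuclideanSpace ℂ (Fin N), 0 ≤ (inner ℂ x (H x) : ℂ).re)
    (μ : Fin N → ℝ) (hμmono : Monotone μ) (hμ0 : ∀ i, 0 ≤ μ i)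
    (ψ : Fin N → EuclideanSpace ℂ (Fin N)) (hortho : Orthonormal ℂ ψ)
    (heig : ∀ i, H (ψ i) = (μ i : ℂ) • ψ i)
    (k : ℕ) (hk : 0 < k) (hkN : k < N)
    (f : Fin k → EuclideanSpace ℂ (Fin N)) (hf : Orthonormal ℂ f)
    (η : ℝ) (hη : 1 < η)
    (hfH : ∀ i : Fin k,
      (inner ℂ (f i) (H (f i)) : ℂ).re ≤ η * μ (Fin.castLE hkN.le i))
    (hgap : μ ⟨k - 1, by omega⟩ < μ ⟨k, hkN⟩) :
    (k : ℝ) - (η - 1) * (∑ i : Fin k, μ (Fin.castLE hkN.le i)) /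
        (μ ⟨k, hkN⟩ - μ ⟨k - 1, by omega⟩) ≤
      ∑ i : Fin k, ∑ j : Fin k,
        ‖(inner ℂ (f i) (ψ (Fin.castLE hkN.le j)) : ℂ)‖ ^ 2 := by
  classical
  have hNpos : 0 < N := lt_trans hk hkN
  have : Nonempty (Fin N) := ⟨⟨0, hNpos⟩⟩
  -- ψ is an orthonormal basis
  have hspan : ⊤ ≤ Submodule.span ℂ (Set.range ψ) :=
    (hortho.linearIndependent.span_eq_top_of_card_eq_finrank
      (by simp [finrank_euclideanSpace_fin])).ge
  set b : OrthonormalBasis (Fin N) ℂ (EuclideanSpace ℂ (Fin N)) :=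
    OrthonormalBasis.mk hortho hspan with hb
  have hbcoe : ∀ j, b j = ψ j := fun j => by rw [hb, OrthonormalBasis.coe_mk]
  set a : Fin k → Fin N → ℝ :=
    fun i j => ‖(inner ℂ (ψ j) (f i) : ℂ)‖ ^ 2 with ha
  have ha0 : ∀ i j, 0 ≤ a i j := fun i j => by positivity
  -- Parseval
  have parseval : ∀ i : Fin k, ∑ j : Fin N, a i j = 1 := by
    intro i
    have h1 : (∑ j : Fin N, (inner ℂ (f i) (b j) : ℂ) * inner ℂ (b j) (f i)) = inner ℂ (f i) (f i) :=
      b.sum_inner_mul_inner (f i) (f i)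
    have h2 : (inner ℂ (f i) (f i) : ℂ) = 1 := by
      rw [inner_self_eq_norm_sq_to_K, hf.1 i]
      norm_num
    have h3 : ∀ j : Fin N, (inner ℂ (f i) (b j) : ℂ) * inner ℂ (b j) (f i)
        = ((a i j : ℝ) : ℂ) := by
      intro j
      rw [hbcoe, ← inner_conj_symm (f i) (ψ j), RCLike.conj_mul, ha]
      norm_cast
    rw [Finset.sum_congr rfl (fun j _ => h3 j), h2] at h1
    have := congrArg Complex.re h1
    simpa using this
  -- energy identity
  have energy : ∀ i : Fin k,
      (inner ℂ (f i) (H (f i)) : ℂ).re = ∑ j : Fin N, μ j * a i j := by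
    intro i
    have hfi : H (f i) = ∑ j : Fin N, ((inner ℂ (ψ j) (f i) : ℂ) * (μ j : ℂ)) • ψ j := by
      conv_lhs => rw [← b.sum_repr' (f i)]
      rw [map_sum]
      refine Finset.sum_congr rfl fun j _ => ?_
      rw [hbcoe, LinearMap.map_smul, heig, smul_smul]
    have hth : (inner ℂ (f i) (H (f i)) : ℂ)
        = ∑ j : Fin N, ((μ j * a i j : ℝ) : ℂ) := by
      rw [hfi, inner_sum]
      refine Finset.sum_congr rfl fun j _ => ?_
      rw [inner_smul_right, ← inner_conj_symm (ψ j) (f i)]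
      rw [mul_comm ((starRingEnd ℂ) (inner ℂ (f i) (ψ j) : ℂ)) ((μ j : ℝ) : ℂ), mul_assoc,
        RCLike.conj_mul]
      have hnorm : ‖(inner ℂ (f i) (ψ j) : ℂ)‖ = ‖(inner ℂ (ψ j) (f i) : ℂ)‖ :=
        norm_inner_symm _ _
      simp only [ha, hnorm]
      push_cast
      ring_nf
      rfl
    rw [hth]
    rw [Complex.re_sum]
    refine Finset.sum_congr rfl fun j _ => ?_
    exact Complex.ofReal_re _
  -- abbreviations
  set e : ℝ := μ ⟨k - 1, by omega⟩ with he
  set g : ℝ := μ ⟨k, hkN⟩ with hg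
  set T : ℝ := ∑ i : Fin k, μ (Fin.castLE hkN.le i) with hT
  set S : ℝ := ∑ i : Fin k, ∑ j : Fin k, a i (Fin.castLE hkN.le j) with hS
  have hge : 0 < g - e := by linarith [hgap]
  -- rewrite the goal in terms of S
  have hgoal : (∑ i : Fin k, ∑ j : Fin k,
      ‖(inner ℂ (f i) (ψ (Fin.castLE hkN.le j)) : ℂ)‖ ^ 2) = S := by
    rw [hS]
    refine Finset.sum_congr rfl fun i _ => Finset.sum_congr rfl fun j _ => ?_
    rw [ha]
    rw [norm_inner_symm]
  rw [hgoal]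
  -- row bound: for each i
  have step1 : ∀ i : Fin k,
      g * (1 - ∑ j : Fin k, a i (Fin.castLE hkN.le j))
        + ∑ j : Fin k, μ (Fin.castLE hkN.le j) * a i (Fin.castLE hkN.le j)
        ≤ η * μ (Fin.castLE hkN.le i) := by
    intro i
    refine le_trans ?_ (hfH i)
    rw [energy i]
    rw [sum_fin_split hkN.le hk (fun j => μ j * a i j)]
    have hsplita := sum_fin_split hkN.le hk (a i)
    rw [parseval i] at hsplita
    have htail : g * (1 - ∑ j : Fin k, a i (Fin.castLE hkN.le j))
        ≤ ∑ j ∈ Finset.univ.filter (fun j : Fin N => ¬ ((j : ℕ) < k)), μ j * a i j := by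
      have h1 : 1 - (∑ j : Fin k, a i (Fin.castLE hkN.le j))
          = ∑ j ∈ Finset.univ.filter (fun j : Fin N => ¬ ((j : ℕ) < k)), a i j := by
        linarith [hsplita]
      rw [h1, Finset.mul_sum]
      refine Finset.sum_le_sum fun j hj => ?_
      simp only [Finset.mem_filter, Finset.mem_univ, true_and, not_lt] at hj
      have hgj : g ≤ μ j := hμmono (show (⟨k, hkN⟩ : Fin N) ≤ j from hj)
      exact mul_le_mul_of_nonneg_right hgj (ha0 i j)
    linarith [htail]
  -- sum the row bounds over i
  have hsum : g * ((k : ℝ) - S)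
      + ∑ j : Fin k, μ (Fin.castLE hkN.le j) * (∑ i : Fin k, a i (Fin.castLE hkN.le j))
      ≤ η * T := by
    have := Finset.sum_le_sum (fun i (_ : i ∈ Finset.univ) => step1 i)
    rw [Finset.sum_add_distrib, ← Finset.mul_sum, Finset.sum_sub_distrib,
      Finset.sum_const, Finset.card_univ, Fintype.card_fin, nsmul_eq_mul, mul_one,
      ← Finset.mul_sum] at this
    rw [Finset.sum_comm (γ := Fin k) (f := fun i j =>
      μ (Fin.castLE hkN.le j) * a i (Fin.castLE hkN.le j))] at this
    simp only [← Finset.mul_sum] at this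
    rw [hS]
    convert this using 2
  -- column bounds (Bessel)
  have colbound : ∀ j : Fin k, ∑ i : Fin k, a i (Fin.castLE hkN.le j) ≤ 1 := by
    intro j
    have hb2 := hf.sum_inner_products_le (s := Finset.univ) (ψ (Fin.castLE hkN.le j))
    rw [hortho.1 (Fin.castLE hkN.le j), one_pow] at hb2
    refine le_trans (le_of_eq ?_) hb2
    refine Finset.sum_congr rfl fun i _ => ?_
    rw [ha, norm_inner_symm]
  have colbound2 : ∀ j : Fin k,
      μ (Fin.castLE hkN.le j) - e + e * (∑ i : Fin k, a i (Fin.castLE hkN.le j))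
        ≤ μ (Fin.castLE hkN.le j) * (∑ i : Fin k, a i (Fin.castLE hkN.le j)) := by
    intro j
    have hje : μ (Fin.castLE hkN.le j) ≤ e := by
      rw [he]
      exact hμmono (show Fin.castLE hkN.le j ≤ (⟨k - 1, by omega⟩ : Fin N) from by
        simp only [Fin.le_def, Fin.coe_castLE]
        omega)
    have hs0 : 0 ≤ ∑ i : Fin k, a i (Fin.castLE hkN.le j) :=
      Finset.sum_nonneg fun i _ => ha0 i _
    nlinarith [colbound j]
  have colsum : T - (k : ℝ) * e + e * S
      ≤ ∑ j : Fin k, μ (Fin.castLE hkN.le j) * (∑ i : Fin k, a i (Fin.castLE hkN.le j)) := by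
    have := Finset.sum_le_sum (fun j (_ : j ∈ Finset.univ) => colbound2 j)
    rw [Finset.sum_add_distrib, Finset.sum_sub_distrib, Finset.sum_const,
      Finset.card_univ, Fintype.card_fin, nsmul_eq_mul, ← Finset.mul_sum] at this
    rw [hT, hS]
    rw [Finset.sum_comm (f := fun j i => a i (Fin.castLE hkN.le j))] at this
    convert this using 3 <;> ring
  -- conclude
  have main : (g - e) * ((k : ℝ) - S) ≤ (η - 1) * T := by
    have hx : (g - e) * ((k : ℝ) - S) = g * ((k : ℝ) - S) - e * (k : ℝ) + e * S := by ring
    rw [hx]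
    linarith [hsum, colsum]
  have hfinal : (k : ℝ) - S ≤ (η - 1) * T / (g - e) := by
    rw [le_div_iff₀ hge]
    nlinarith [main]
  linarith [hfinal]
end

section
/- Let φ ∈ H¹(ℝ), R > 0, κ > 0, and let d : ℝ → [0,∞) be supported in [−R, R] with g' = ∫_ℝ d(z) dz. Then for any fixed z' ∈ ℝ: ∫_ℝ d(z − z') |φ(z)|² dz ≥ g' · (max_{z: |z−z'| ≤ R} |φ(z)|²) · (1 − √(2 g' R/κ)) − κ ∫_ℝ |φ'(z)|² dz. -/
open MeasureTheory

lemma normphi'_integrableOn (φ' : ℝ → ℂ) (hmeas : Measurable φ')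
    (hφ'int : Integrable (fun t => ‖φ' t‖ ^ 2)) (l u : ℝ) :
    IntegrableOn (fun t => ‖φ' t‖) (Set.Icc l u) := by
  have hg : IntegrableOn (fun t => 1 + ‖φ' t‖^2) (Set.Icc l u) :=
    (integrableOn_const measure_Icc_lt_top.ne).add hφ'int.integrableOn
  refine hg.integrable.mono (hmeas.norm.aestronglyMeasurable) ?_
  filter_upwards with t
  have h0 : (0:ℝ) ≤ ‖φ' t‖ := norm_nonneg _
  rw [Real.norm_eq_abs, Real.norm_eq_abs, abs_of_nonneg h0]
  have : ‖φ' t‖ ≤ 1 + ‖φ' t‖^2 := by nlinarith [sq_nonneg (‖φ' t‖ - 1)]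
  calc ‖φ' t‖ ≤ 1 + ‖φ' t‖^2 := this
    _ ≤ |1 + ‖φ' t‖^2| := le_abs_self _

lemma sqnorm_hasDerivAt (φ φ' : ℝ → ℂ) (hderiv : ∀ t, HasDerivAt φ (φ' t) t) (t : ℝ) :
    HasDerivAt (fun s => ‖φ s‖^2) (2 * ((starRingEnd ℂ) (φ t) * φ' t).re) t := by
  have hre : HasDerivAt (fun s => (φ s).re) ((φ' t).re) t :=
    (Complex.reCLM.hasFDerivAt.comp_hasDerivAt t (hderiv t))
  have him : HasDerivAt (fun s => (φ s).im) ((φ' t).im) t :=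
    (Complex.imCLM.hasFDerivAt.comp_hasDerivAt t (hderiv t))
  have h : HasDerivAt (fun s => (φ s).re * (φ s).re + (φ s).im * (φ s).im) _ t :=
    (hre.mul hre).add (him.mul him)
  have heq : (fun s => (φ s).re * (φ s).re + (φ s).im * (φ s).im) = fun s => ‖φ s‖^2 := by
    funext s
    rw [← Complex.normSq_apply, ← Complex.sq_norm]
  rw [heq] at h
  convert h using 1
  simp [Complex.mul_re]
  ring

lemma Dbound (φ φ' : ℝ → ℂ) (t : ℝ) :
    |2 * ((starRingEnd ℂ) (φ t) * φ' t).re| ≤ 2 * ‖φ t‖ * ‖φ' t‖ := by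
  rw [abs_mul]
  have h1 : |((starRingEnd ℂ) (φ t) * φ' t).re| ≤ ‖(starRingEnd ℂ) (φ t) * φ' t‖ :=
    Complex.abs_re_le_norm _
  have h2 : ‖(starRingEnd ℂ) (φ t) * φ' t‖ = ‖φ t‖ * ‖φ' t‖ := by
    rw [norm_mul]; simp
  rw [h2] at h1
  calc |(2:ℝ)| * |((starRingEnd ℂ) (φ t) * φ' t).re|
      = 2 * |((starRingEnd ℂ) (φ t) * φ' t).re| := by norm_num
    _ ≤ 2 * (‖φ t‖ * ‖φ' t‖) := by linarith
    _ = 2 * ‖φ t‖ * ‖φ' t‖ := by ring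

lemma key_bound (φ φ' : ℝ → ℂ) (hderiv : ∀ t, HasDerivAt φ (φ' t) t)
    (hφ'int : Integrable (fun t => ‖φ' t‖ ^ 2))
    (l u C : ℝ) (hC : ∀ t ∈ Set.Icc l u, ‖φ t‖ ≤ C)
    (a b : ℝ) (ha : a ∈ Set.Icc l u) (hb : b ∈ Set.Icc l u) :
    ‖φ b‖^2 - ‖φ a‖^2 ≤ ∫ t in Set.Icc l u, 2*C*‖φ' t‖ := by
  have hC0 : 0 ≤ C := le_trans (norm_nonneg _) (hC a ha)
  have hmeas : Measurable φ' := by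
    have h : φ' = deriv φ := funext fun t => ((hderiv t).deriv).symm
    rw [h]; exact measurable_deriv φ
  have hcont : Continuous φ := by
    rw [continuous_iff_continuousAt]; exact fun t => (hderiv t).continuousAt
  set D : ℝ → ℝ := fun t => 2 * ((starRingEnd ℂ) (φ t) * φ' t).re with hDdef
  have hDmeas : Measurable D := by
    apply Measurable.const_mul
    exact Complex.measurable_re.comp ((Complex.continuous_conj.comp hcont).measurable.mul hmeas)
  have hsub : Set.uIcc a b ⊆ Set.Icc l u := Set.uIcc_subset_Icc ha hb
  have hsub' : Set.uIoc a b ⊆ Set.Icc l u :=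
    subset_trans Set.Ioc_subset_Icc_self hsub
  have hintg : IntegrableOn (fun t => 2*C*‖φ' t‖) (Set.Icc l u) :=
    (normphi'_integrableOn φ' hmeas hφ'int l u).const_mul (2*C)
  have hintgI : IntegrableOn (fun t => 2*C*‖φ' t‖) (Set.uIoc a b) := hintg.mono_set hsub'
  have hDptle : ∀ t ∈ Set.Icc l u, |D t| ≤ 2*C*‖φ' t‖ := by
    intro t ht
    calc |D t| ≤ 2 * ‖φ t‖ * ‖φ' t‖ := Dbound φ φ' t
      _ ≤ 2*C*‖φ' t‖ := by
          have := hC t ht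
          have := norm_nonneg (φ' t)
          nlinarith
  have hDint : IntervalIntegrable D volume a b := by
    rw [intervalIntegrable_iff]
    refine hintgI.integrable.mono hDmeas.aestronglyMeasurable ?_
    filter_upwards [ae_restrict_mem measurableSet_uIoc] with t ht
    rw [Real.norm_eq_abs, Real.norm_eq_abs]
    calc |D t| ≤ 2*C*‖φ' t‖ := hDptle t (hsub' ht)
      _ ≤ |2*C*‖φ' t‖| := le_abs_self _
  have hftc : ∫ y in a..b, D y = ‖φ b‖^2 - ‖φ a‖^2 :=
    intervalIntegral.integral_eq_sub_of_hasDerivAt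
      (fun x _ => sqnorm_hasDerivAt φ φ' hderiv x) hDint
  rw [← hftc]
  calc ∫ y in a..b, D y ≤ ‖∫ y in a..b, D y‖ := le_abs_self _
    _ ≤ ∫ t in Set.uIoc a b, ‖D t‖ := intervalIntegral.norm_integral_le_integral_norm_uIoc
    _ ≤ ∫ t in Set.uIoc a b, 2*C*‖φ' t‖ := by
        apply setIntegral_mono_on
        · rw [intervalIntegrable_iff] at hDint
          exact hDint.norm
        · exact hintgI
        · exact measurableSet_uIoc
        · intro t ht
          rw [Real.norm_eq_abs]
          exact hDptle t (hsub' ht)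
    _ ≤ ∫ t in Set.Icc l u, 2*C*‖φ' t‖ := by
        apply setIntegral_mono_set hintg
        · filter_upwards with t
          positivity
        · exact Filter.Eventually.of_forall hsub'

lemma amgm_div (a b κ : ℝ) (hκ : 0 < κ) : 2*a*b ≤ a^2/κ + κ*b^2 := by
  have h : a^2/κ + κ*b^2 - 2*a*b = (a - κ*b)^2/κ := by field_simp; ring
  nlinarith [div_nonneg (sq_nonneg (a - κ*b)) hκ.le]


/-- For `φ ∈ H¹(ℝ)`, `d ≥ 0` supported in `[-R, R]` with `g' = ∫ d`, and `κ > 0`: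
`∫ d(z-z')|φ(z)|² dz ≥ g' (max_{|z-z'|≤R} |φ(z)|²)(1 - √(2g'R/κ)) - κ ∫ |φ'|²`. -/
theorem delta_function_lower_bound (φ φ' : ℝ → ℂ)
    (hderiv : ∀ t, HasDerivAt φ (φ' t) t)
    (hφ'int : Integrable (fun t => ‖φ' t‖ ^ 2))
    (R κ : ℝ) (hR : 0 < R) (hκ : 0 < κ)
    (d : ℝ → ℝ) (hd0 : ∀ z, 0 ≤ d z) (hdsupp : ∀ z, R < |z| → d z = 0)
    (hdint : Integrable d) (g' : ℝ) (hg' : g' = ∫ z, d z) (z' : ℝ)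
    (hint : Integrable (fun z => d (z - z') * ‖φ z‖ ^ 2)) :
    g' * (⨆ z : Set.Icc (z' - R) (z' + R), ‖φ (z : ℝ)‖ ^ 2) *
        (1 - Real.sqrt (2 * g' * R / κ))
      - κ * ∫ z, ‖φ' z‖ ^ 2
    ≤ ∫ z, d (z - z') * ‖φ z‖ ^ 2 := by
  set I := Set.Icc (z' - R) (z' + R) with hI
  have hne : I.Nonempty := Set.nonempty_Icc.mpr (by linarith)
  have hcont : Continuous φ := by
    rw [continuous_iff_continuousAt]; exact fun t => (hderiv t).continuousAt
  have hcont2 : Continuous fun z => ‖φ z‖^2 := (hcont.norm).pow 2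
  obtain ⟨zs, hzsI, hzsmax'⟩ := isCompact_Icc.exists_isMaxOn hne hcont2.continuousOn
  have hzsmax : ∀ y ∈ I, ‖φ y‖^2 ≤ ‖φ zs‖^2 := fun y hy => hzsmax' hy
  set M := ⨆ z : I, ‖φ (z:ℝ)‖^2 with hMdef
  haveI : Nonempty I := hne.to_subtype
  have hbdd : BddAbove (Set.range fun z : I => ‖φ (z:ℝ)‖^2) := by
    refine ⟨‖φ zs‖^2, ?_⟩
    rintro _ ⟨z, rfl⟩; exact hzsmax z z.2
  have hM : M = ‖φ zs‖^2 :=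
    le_antisymm (ciSup_le fun z => hzsmax z z.2) (le_ciSup hbdd ⟨zs, hzsI⟩)
  have hM0 : 0 ≤ M := hM ▸ sq_nonneg _
  have hg'0 : 0 ≤ g' := hg' ▸ integral_nonneg hd0
  have hE0 : 0 ≤ ∫ z, ‖φ' z‖^2 := integral_nonneg fun z => sq_nonneg _
  have hintpos : 0 ≤ ∫ z, d (z - z') * ‖φ z‖ ^ 2 :=
    integral_nonneg fun z => mul_nonneg (hd0 _) (sq_nonneg _)
  set x := 2 * g' * R / κ with hxdef
  have hx0 : 0 ≤ x :=
    div_nonneg (mul_nonneg (mul_nonneg (by norm_num) hg'0) hR.le) hκ.le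
  by_cases hcase : 1 ≤ Real.sqrt x
  · have h1 : g' * M * (1 - Real.sqrt x) ≤ 0 :=
      mul_nonpos_of_nonneg_of_nonpos (mul_nonneg hg'0 hM0) (by linarith)
    have h2 := mul_nonneg hκ.le hE0
    linarith
  · push_neg at hcase
    have hsx0 : 0 ≤ Real.sqrt x := Real.sqrt_nonneg x
    have hxx : x ≤ Real.sqrt x := by nlinarith [Real.sq_sqrt hx0]
    have hmeas : Measurable φ' := by
      have h : φ' = deriv φ := funext fun t => ((hderiv t).deriv).symm
      rw [h]; exact measurable_deriv φ
    have hCle : ∀ t ∈ I, ‖φ t‖ ≤ Real.sqrt M := by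
      intro t ht
      rw [← Real.sqrt_sq (norm_nonneg (φ t))]
      exact Real.sqrt_le_sqrt (hM ▸ hzsmax t ht)
    set J := ∫ t in I, ‖φ' t‖ with hJ
    have hkey : ∀ z ∈ I, M - 2 * Real.sqrt M * J ≤ ‖φ z‖^2 := by
      intro z hz
      have h := key_bound φ φ' hderiv hφ'int (z'-R) (z'+R) (Real.sqrt M) hCle z zs hz hzsI
      have hc : ∫ t in I, 2*Real.sqrt M*‖φ' t‖ = 2*Real.sqrt M * J := by
        rw [hJ, ← integral_const_mul]
      rw [hc, ← hM] at h
      linarith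
    set c := M - 2*Real.sqrt M * J with hcdef
    have hpt : ∀ z, d (z - z') * c ≤ d (z - z') * ‖φ z‖^2 := by
      intro z
      by_cases hz : |z - z'| ≤ R
      · have hzI : z ∈ I := by
          rw [hI, Set.mem_Icc]
          obtain ⟨h1, h2⟩ := abs_le.mp hz
          constructor <;> linarith
        exact mul_le_mul_of_nonneg_left (hkey z hzI) (hd0 _)
      · rw [hdsupp _ (not_le.mp hz)]; simp
    have hdc : Integrable fun z => d (z - z') * c := (hdint.comp_sub_right z').mul_const c
    have hmono : ∫ z, d (z - z') * c ≤ ∫ z, d (z - z') * ‖φ z‖^2 :=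
      integral_mono hdc hint hpt
    have hval : ∫ z, d (z - z') * c = g' * c := by
      rw [integral_mul_const, integral_sub_right_eq_self d z', ← hg', mul_comm]
    have hmain : g' * (2 * Real.sqrt M * J) ≤ g' * M * Real.sqrt x + κ * ∫ z, ‖φ' z‖^2 := by
      have e1 : g' * (2*Real.sqrt M * J) = ∫ t in I, (2*g'*Real.sqrt M) * ‖φ' t‖ := by
        rw [integral_const_mul, hJ]; ring
      have e2 : ∫ t in I, (2*g'*Real.sqrt M)*‖φ' t‖
          ≤ ∫ t in I, (g'^2*M/κ + κ*‖φ' t‖^2) := by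
        apply setIntegral_mono_on
        · exact (normphi'_integrableOn φ' hmeas hφ'int _ _).const_mul _
        · exact (integrableOn_const measure_Icc_lt_top.ne).add
            (hφ'int.integrableOn.const_mul κ)
        · exact measurableSet_Icc
        · intro t _
          calc (2*g'*Real.sqrt M)*‖φ' t‖ = 2*(g'*Real.sqrt M)*‖φ' t‖ := by ring
            _ ≤ (g'*Real.sqrt M)^2/κ + κ*‖φ' t‖^2 := amgm_div _ _ _ hκ
            _ = g'^2*M/κ + κ*‖φ' t‖^2 := by rw [mul_pow, Real.sq_sqrt hM0]
      have e3 : ∫ t in I, (g'^2*M/κ + κ*‖φ' t‖^2)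
          = (g'^2*M/κ)*(2*R) + κ*∫ t in I, ‖φ' t‖^2 := by
        rw [integral_add (integrableOn_const (C := g'^2*M/κ) measure_Icc_lt_top.ne)
            (hφ'int.integrableOn.const_mul κ), integral_const_mul, setIntegral_const]
        rw [hI, measureReal_def, Real.volume_Icc]
        have : z' + R - (z' - R) = 2*R := by ring
        rw [this, ENNReal.toReal_ofReal (by linarith), smul_eq_mul]
        ring
      have e4 : (g'^2*M/κ)*(2*R) ≤ g'*M*Real.sqrt x := by
        have h : (g'^2*M/κ)*(2*R) = (g'*M)*x := by rw [hxdef]; field_simp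
        rw [h]
        exact mul_le_mul_of_nonneg_left hxx (mul_nonneg hg'0 hM0)
      have e5 : κ * ∫ t in I, ‖φ' t‖^2 ≤ κ * ∫ z, ‖φ' z‖^2 :=
        mul_le_mul_of_nonneg_left
          (setIntegral_le_integral hφ'int (Filter.Eventually.of_forall fun z => sq_nonneg _))
          hκ.le
      calc g' * (2 * Real.sqrt M * J) = ∫ t in I, (2*g'*Real.sqrt M) * ‖φ' t‖ := e1
        _ ≤ ∫ t in I, (g'^2*M/κ + κ*‖φ' t‖^2) := e2
        _ = (g'^2*M/κ)*(2*R) + κ*∫ t in I, ‖φ' t‖^2 := e3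
        _ ≤ g'*M*Real.sqrt x + κ * ∫ z, ‖φ' z‖^2 := add_le_add e4 e5
    have hfin : g' * M * (1 - Real.sqrt x) - κ * ∫ z, ‖φ' z‖^2 ≤ g' * c := by
      rw [hcdef]; nlinarith [hmain]
    calc g' * M * (1 - Real.sqrt x) - κ * ∫ z, ‖φ' z‖^2 ≤ g' * c := hfin
      _ = ∫ z, d (z - z') * c := hval.symm
      _ ≤ ∫ z, d (z - z') * ‖φ z‖^2 := hmono
end

section
/- Let b : ℝ² → [0,∞) be such that b² is Lipschitz with ‖∇b²‖_∞ < ∞, and let R, r, δ > 0. Define 𝓑_δ = {x ∈ ℝ² : b(x)² ≥ δ} and let U : [0,∞) → [0,∞) satisfy ∫_{ℝ³} U(|x|) d³x = 4π and supp U ⊆ [0, R]. Then ∫_ℝ dz ∫_{ℝ²×ℝ²} b_r(x)² b_r(y)² U(√(|x−y|²+z²)) 𝟙_{𝓑_δ}(y/r) dx dy ≥ (4π/r²)(‖b‖₄⁴ − δ − R ‖∇b²‖_∞ / r), where b_r(x) = r^{-1}b(x/r). -/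
open MeasureTheory
open scoped Real
open scoped ENNReal

set_option maxHeartbeats 1000000

private lemma slice3d (U : ℝ → ℝ) (hU : Measurable U) :
    ∫⁻ w : EuclideanSpace ℝ (Fin 3), ENNReal.ofReal (U ‖w‖)
      = ∫⁻ z : ℝ, ∫⁻ x : EuclideanSpace ℝ (Fin 2),
          ENNReal.ofReal (U (Real.sqrt (‖x‖ ^ 2 + z ^ 2))) := by
  have e3 := EuclideanSpace.volume_preserving_symm_measurableEquiv_toLp (Fin 3)
  have e2 := EuclideanSpace.volume_preserving_symm_measurableEquiv_toLp (Fin 2)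
  have hmm : Measurable fun p : Fin 3 → ℝ =>
      ENNReal.ofReal (U (Real.sqrt (p 0 ^ 2 + p 1 ^ 2 + p 2 ^ 2))) := by
    refine (ENNReal.measurable_ofReal.comp hU).comp (Measurable.sqrt ?_)
    exact (((measurable_pi_apply 0).pow_const 2).add
      ((measurable_pi_apply 1).pow_const 2)).add ((measurable_pi_apply 2).pow_const 2)
  have h1 : ∫⁻ w : EuclideanSpace ℝ (Fin 3), ENNReal.ofReal (U ‖w‖)
      = ∫⁻ p : Fin 3 → ℝ, ENNReal.ofReal (U (Real.sqrt (p 0 ^ 2 + p 1 ^ 2 + p 2 ^ 2))) := by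
    rw [← e3.lintegral_comp hmm]
    refine lintegral_congr fun w => ?_
    have hw : ‖w‖ = Real.sqrt (w 0 ^ 2 + w 1 ^ 2 + w 2 ^ 2) := by
      rw [EuclideanSpace.norm_eq, Fin.sum_univ_three]
      simp [Real.norm_eq_abs, sq_abs]
    rw [hw]
    rfl
  have e := MeasureTheory.volume_preserving_piFinSuccAbove (fun _ : Fin 3 => ℝ) 0
  have hg : Measurable fun u : ℝ × (Fin 2 → ℝ) =>
      ENNReal.ofReal (U (Real.sqrt (u.2 0 ^ 2 + u.2 1 ^ 2 + u.1 ^ 2))) := by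
    refine (ENNReal.measurable_ofReal.comp hU).comp (Measurable.sqrt ?_)
    exact (((measurable_pi_apply 0).comp measurable_snd).pow_const 2).add
      (((measurable_pi_apply 1).comp measurable_snd).pow_const 2) |>.add
      (measurable_fst.pow_const 2)
  have h2 : ∫⁻ p : Fin 3 → ℝ, ENNReal.ofReal (U (Real.sqrt (p 0 ^ 2 + p 1 ^ 2 + p 2 ^ 2)))
      = ∫⁻ u : ℝ × (Fin 2 → ℝ),
          ENNReal.ofReal (U (Real.sqrt (u.2 0 ^ 2 + u.2 1 ^ 2 + u.1 ^ 2))) := by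
    rw [← e.lintegral_comp hg]
    refine lintegral_congr fun p => ?_
    have h0 : (MeasurableEquiv.piFinSuccAbove (fun _ : Fin 3 => ℝ) 0 p).1 = p 0 := rfl
    have ha : (MeasurableEquiv.piFinSuccAbove (fun _ : Fin 3 => ℝ) 0 p).2 0 = p 1 := rfl
    have hb : (MeasurableEquiv.piFinSuccAbove (fun _ : Fin 3 => ℝ) 0 p).2 1 = p 2 := rfl
    rw [h0, ha, hb]
    ring_nf
  have h3 : ∫⁻ u : ℝ × (Fin 2 → ℝ),
        ENNReal.ofReal (U (Real.sqrt (u.2 0 ^ 2 + u.2 1 ^ 2 + u.1 ^ 2)))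
      = ∫⁻ z : ℝ, ∫⁻ q : Fin 2 → ℝ,
          ENNReal.ofReal (U (Real.sqrt (q 0 ^ 2 + q 1 ^ 2 + z ^ 2))) := by
    rw [Measure.volume_eq_prod, lintegral_prod _ hg.aemeasurable]
  have h4 : ∀ z : ℝ, (∫⁻ q : Fin 2 → ℝ,
        ENNReal.ofReal (U (Real.sqrt (q 0 ^ 2 + q 1 ^ 2 + z ^ 2))))
      = ∫⁻ x : EuclideanSpace ℝ (Fin 2),
          ENNReal.ofReal (U (Real.sqrt (‖x‖ ^ 2 + z ^ 2))) := by
    intro z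
    have hg2 : Measurable fun q : Fin 2 → ℝ =>
        ENNReal.ofReal (U (Real.sqrt (q 0 ^ 2 + q 1 ^ 2 + z ^ 2))) := by
      refine (ENNReal.measurable_ofReal.comp hU).comp (Measurable.sqrt ?_)
      exact (((measurable_pi_apply 0).pow_const 2).add
        ((measurable_pi_apply 1).pow_const 2)).add measurable_const
    rw [← e2.lintegral_comp hg2]
    refine lintegral_congr fun x => ?_
    have hx : ‖x‖ ^ 2 = x 0 ^ 2 + x 1 ^ 2 := by
      rw [EuclideanSpace.norm_eq, Fin.sum_univ_two, Real.sq_sqrt (by positivity)]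
      simp [Real.norm_eq_abs, sq_abs]
    rw [hx]
    rfl
  rw [h1, h2, h3]
  exact lintegral_congr h4

private lemma scaling2d (Φ : EuclideanSpace ℝ (Fin 2) → ℝ≥0∞) (hΦ : Measurable Φ)
    {r : ℝ} (hr : 0 < r) :
    ∫⁻ y : EuclideanSpace ℝ (Fin 2), Φ (r⁻¹ • y)
      = ENNReal.ofReal (r ^ 2) * ∫⁻ y, Φ y := by
  have hmap : Measure.map (r⁻¹ • · : EuclideanSpace ℝ (Fin 2) → _) volume
      = ENNReal.ofReal |((r⁻¹) ^ Module.finrank ℝ (EuclideanSpace ℝ (Fin 2)))⁻¹| • volume :=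
    Measure.map_addHaar_smul volume (inv_ne_zero hr.ne')
  have hms : Measurable (fun y : EuclideanSpace ℝ (Fin 2) => r⁻¹ • y) :=
    measurable_const_smul _
  rw [← lintegral_map hΦ hms, hmap, lintegral_smul_measure]
  congr 1
  rw [finrank_euclideanSpace_fin]
  rw [abs_of_nonneg (by positivity)]
  congr 1
  field_simp

private lemma kernel_eval (U : ℝ → ℝ) (hU : Measurable U)
    (Φ : EuclideanSpace ℝ (Fin 2) → ℝ≥0∞) (hΦ : Measurable Φ) :
    ∫⁻ z : ℝ, ∫⁻ x : EuclideanSpace ℝ (Fin 2), ∫⁻ y : EuclideanSpace ℝ (Fin 2),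
        Φ y * ENNReal.ofReal (U (Real.sqrt (dist x y ^ 2 + z ^ 2)))
      = (∫⁻ y, Φ y) * ∫⁻ w : EuclideanSpace ℝ (Fin 3), ENNReal.ofReal (U ‖w‖) := by
  have hstep : ∀ z : ℝ, (∫⁻ x : EuclideanSpace ℝ (Fin 2), ∫⁻ y : EuclideanSpace ℝ (Fin 2),
        Φ y * ENNReal.ofReal (U (Real.sqrt (dist x y ^ 2 + z ^ 2))))
      = (∫⁻ y, Φ y) *
          ∫⁻ x : EuclideanSpace ℝ (Fin 2), ENNReal.ofReal (U (Real.sqrt (‖x‖ ^ 2 + z ^ 2))) := by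
    intro z
    have hjoint : Measurable fun p : EuclideanSpace ℝ (Fin 2) × EuclideanSpace ℝ (Fin 2) =>
        Φ p.2 * ENNReal.ofReal (U (Real.sqrt (dist p.1 p.2 ^ 2 + z ^ 2))) := by
      refine (hΦ.comp measurable_snd).mul ?_
      refine ENNReal.measurable_ofReal.comp (hU.comp ?_)
      exact (((measurable_fst.dist measurable_snd).pow_const 2).add measurable_const).sqrt
    rw [lintegral_lintegral_swap hjoint.aemeasurable]
    have hinner : ∀ y : EuclideanSpace ℝ (Fin 2),
        (∫⁻ x, Φ y * ENNReal.ofReal (U (Real.sqrt (dist x y ^ 2 + z ^ 2))))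
          = Φ y * ∫⁻ x : EuclideanSpace ℝ (Fin 2),
              ENNReal.ofReal (U (Real.sqrt (‖x‖ ^ 2 + z ^ 2))) := by
      intro y
      have hk : Measurable fun x : EuclideanSpace ℝ (Fin 2) =>
          ENNReal.ofReal (U (Real.sqrt (dist x y ^ 2 + z ^ 2))) := by
        refine ENNReal.measurable_ofReal.comp (hU.comp ?_)
        exact (((measurable_id.dist measurable_const).pow_const 2).add measurable_const).sqrt
      rw [lintegral_const_mul _ hk]
      congr 1
      have h1 : ∀ x : EuclideanSpace ℝ (Fin 2), dist x y = ‖x - y‖ :=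
        fun x => dist_eq_norm x y
      simp_rw [h1]
      exact lintegral_sub_right_eq_self
        (fun x => ENNReal.ofReal (U (Real.sqrt (‖x‖ ^ 2 + z ^ 2)))) y
    simp_rw [hinner]
    rw [lintegral_mul_const _ hΦ]
  simp_rw [hstep]
  have hm : Measurable fun z : ℝ => ∫⁻ x : EuclideanSpace ℝ (Fin 2),
      ENNReal.ofReal (U (Real.sqrt (‖x‖ ^ 2 + z ^ 2))) := by
    have hj : Measurable (Function.uncurry fun (z : ℝ) (x : EuclideanSpace ℝ (Fin 2)) =>
        ENNReal.ofReal (U (Real.sqrt (‖x‖ ^ 2 + z ^ 2)))) := by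
      refine ENNReal.measurable_ofReal.comp (hU.comp ?_)
      exact (((measurable_norm.comp measurable_snd).pow_const 2).add
        (measurable_fst.pow_const 2)).sqrt
    exact hj.lintegral_prod_right'
  rw [lintegral_const_mul _ hm]
  congr 1
  exact (slice3d U hU).symm

private lemma triple_convert {α β γ : Type*} [MeasureSpace α] [MeasureSpace β] [MeasureSpace γ]
    [SFinite (volume : Measure β)] [SFinite (volume : Measure γ)]
    (F : α → β → γ → ℝ)
    (hFm : Measurable fun p : α × β × γ => F p.1 p.2.1 p.2.2)
    (hF0 : ∀ z x y, 0 ≤ F z x y)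
    (hItop : (∫⁻ z, ∫⁻ x, ∫⁻ y, ENNReal.ofReal (F z x y)) ≠ ⊤) :
    ∫ z, ∫ x, ∫ y, F z x y = (∫⁻ z, ∫⁻ x, ∫⁻ y, ENNReal.ofReal (F z x y)).toReal := by
  have hGm : Measurable fun p : α × β × γ => ENNReal.ofReal (F p.1 p.2.1 p.2.2) :=
    ENNReal.measurable_ofReal.comp hFm
  have hAm : Measurable fun p : α × β => ∫⁻ y, ENNReal.ofReal (F p.1 p.2 y) := by
    refine Measurable.lintegral_prod_right'
      (f := fun q : (α × β) × γ => ENNReal.ofReal (F q.1.1 q.1.2 q.2)) ?_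
    exact hGm.comp ((measurable_fst.comp measurable_fst).prodMk
      ((measurable_snd.comp measurable_fst).prodMk measurable_snd))
  have hBm : Measurable fun z : α => ∫⁻ x, ∫⁻ y, ENNReal.ofReal (F z x y) :=
    Measurable.lintegral_prod_right' hAm
  have hBlt : ∀ᵐ z, (∫⁻ x, ∫⁻ y, ENNReal.ofReal (F z x y)) < ⊤ := ae_lt_top hBm hItop
  have hinner : ∀ z x, ∫ y, F z x y = (∫⁻ y, ENNReal.ofReal (F z x y)).toReal := by
    intro z x
    refine integral_eq_lintegral_of_nonneg_ae (ae_of_all _ (hF0 z x)) ?_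
    exact (hFm.comp (measurable_const.prodMk
      (measurable_const.prodMk measurable_id))).aestronglyMeasurable
  have hmid : ∀ z, (∫⁻ x, ∫⁻ y, ENNReal.ofReal (F z x y)) ≠ ⊤ →
      (∫ x, ∫ y, F z x y) = (∫⁻ x, ∫⁻ y, ENNReal.ofReal (F z x y)).toReal := by
    intro z hz
    have hAzm : Measurable fun x => ∫⁻ y, ENNReal.ofReal (F z x y) :=
      hAm.comp (measurable_const.prodMk measurable_id)
    simp_rw [hinner z]
    rw [integral_eq_lintegral_of_nonneg_ae (ae_of_all _ fun x => ENNReal.toReal_nonneg)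
      hAzm.ennreal_toReal.aestronglyMeasurable]
    congr 1
    refine lintegral_congr_ae ?_
    filter_upwards [ae_lt_top hAzm hz] with x hx
    rw [ENNReal.ofReal_toReal hx.ne]
  calc ∫ z, ∫ x, ∫ y, F z x y
      = ∫ z, (∫⁻ x, ∫⁻ y, ENNReal.ofReal (F z x y)).toReal := by
        refine integral_congr_ae ?_
        filter_upwards [hBlt] with z hz
        exact hmid z hz.ne
    _ = (∫⁻ z, ENNReal.ofReal ((∫⁻ x, ∫⁻ y, ENNReal.ofReal (F z x y)).toReal)).toReal :=
        integral_eq_lintegral_of_nonneg_ae (ae_of_all _ fun z => ENNReal.toReal_nonneg)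
          hBm.ennreal_toReal.aestronglyMeasurable
    _ = (∫⁻ z, ∫⁻ x, ∫⁻ y, ENNReal.ofReal (F z x y)).toReal := by
        congr 1
        refine lintegral_congr_ae ?_
        filter_upwards [hBlt] with z hz
        rw [ENNReal.ofReal_toReal hz.ne]


/-- Lower bound on the effective one-dimensional interaction: with `b ≥ 0`,
`‖b‖₂ = 1`, `b²` Lipschitz with constant `L = ‖∇b²‖_∞`, `b_r(x) = r⁻¹ b(x/r)`,
`𝓑_δ = {b² ≥ δ}`, and `U ≥ 0` radial with support in `[0,R]` and
`∫_{ℝ³} U(|x|) d³x = 4π`: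
`∫ dz ∫∫ b_r(x)² b_r(y)² U(√(|x-y|²+z²)) 𝟙_{𝓑_δ}(y/r) dx dy
  ≥ (4π/r²)(‖b‖₄⁴ - δ - R‖∇b²‖_∞/r)`. -/
theorem effective_interaction_lower_bound (b : EuclideanSpace ℝ (Fin 2) → ℝ)
    (hbmeas : Measurable b) (hb0 : ∀ x, 0 ≤ b x)
    (L : ℝ) (hL : 0 ≤ L)
    (hlip : ∀ x y : EuclideanSpace ℝ (Fin 2), |b x ^ 2 - b y ^ 2| ≤ L * dist x y)
    (hb2 : ∫ x, b x ^ 2 = 1) (hb4 : Integrable (fun x => b x ^ 4))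
    (R r δ : ℝ) (hR : 0 < R) (hr : 0 < r) (hδ : 0 < δ)
    (U : ℝ → ℝ) (hUmeas : Measurable U) (hU0 : ∀ t, 0 ≤ U t)
    (hUsupp : ∀ t, R < t → U t = 0)
    (hUint : ∫ x : EuclideanSpace ℝ (Fin 3), U ‖x‖ = 4 * π) :
    4 * π / r ^ 2 * ((∫ x, b x ^ 4) - δ - R * L / r) ≤
      ∫ z : ℝ, ∫ x : EuclideanSpace ℝ (Fin 2), ∫ y : EuclideanSpace ℝ (Fin 2),
        (r⁻¹ * b (r⁻¹ • x)) ^ 2 * (r⁻¹ * b (r⁻¹ • y)) ^ 2 *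
          U (Real.sqrt (dist x y ^ 2 + z ^ 2)) *
          (if δ ≤ b (r⁻¹ • y) ^ 2 then 1 else 0) := by
  have hπ := Real.pi_pos
  set F : ℝ → EuclideanSpace ℝ (Fin 2) → EuclideanSpace ℝ (Fin 2) → ℝ :=
    fun z x y => (r⁻¹ * b (r⁻¹ • x)) ^ 2 * (r⁻¹ * b (r⁻¹ • y)) ^ 2 *
      U (Real.sqrt (dist x y ^ 2 + z ^ 2)) *
      (if δ ≤ b (r⁻¹ • y) ^ 2 then 1 else 0) with hFdef
  show 4 * π / r ^ 2 * ((∫ x, b x ^ 4) - δ - R * L / r) ≤ ∫ z, ∫ x, ∫ y, F z x y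
  have hF0 : ∀ z x y, 0 ≤ F z x y := by
    intro z x y
    refine mul_nonneg (mul_nonneg (mul_nonneg (sq_nonneg _) (sq_nonneg _)) (hU0 _)) ?_
    split <;> norm_num
  -- trivial case
  rcases le_or_gt ((∫ x, b x ^ 4) - δ - R * L / r) 0 with hT | hT
  · refine le_trans (mul_nonpos_iff.2 (Or.inl ⟨by positivity, hT⟩)) ?_
    exact integral_nonneg fun z => integral_nonneg fun x => integral_nonneg fun y => hF0 z x y
  set c : ℝ := R * L / r with hcdef
  have hc : 0 ≤ c := by positivity
  have hi2 : Integrable (fun x : EuclideanSpace ℝ (Fin 2) => b x ^ 2) := by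
    by_contra h
    rw [integral_undef h] at hb2
    norm_num at hb2
  -- measurability
  have hbr : Measurable fun y : EuclideanSpace ℝ (Fin 2) => b (r⁻¹ • y) :=
    hbmeas.comp (measurable_const_smul _)
  have hFm : Measurable fun p : ℝ × EuclideanSpace ℝ (Fin 2) × EuclideanSpace ℝ (Fin 2) =>
      F p.1 p.2.1 p.2.2 := by
    refine Measurable.mul (Measurable.mul (Measurable.mul ?_ ?_) ?_) ?_
    · exact ((measurable_const.mul (hbr.comp (measurable_fst.comp measurable_snd))).pow_const 2)
    · exact ((measurable_const.mul (hbr.comp (measurable_snd.comp measurable_snd))).pow_const 2)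
    · refine hUmeas.comp (Measurable.sqrt ?_)
      exact (((measurable_fst.comp measurable_snd).dist
        (measurable_snd.comp measurable_snd)).pow_const 2).add (measurable_fst.pow_const 2)
    · refine Measurable.ite ?_ measurable_const measurable_const
      exact measurableSet_le measurable_const
        (((hbr.comp (measurable_snd.comp measurable_snd))).pow_const 2)
  -- the comparison functions
  set k : ℝ := r⁻¹ ^ 2 * r⁻¹ ^ 2 with hkdef
  have hk0 : 0 ≤ k := by positivity
  set ψlow : EuclideanSpace ℝ (Fin 2) → ℝ :=
    fun u => max (b u ^ 2 - c) 0 * b u ^ 2 * (if δ ≤ b u ^ 2 then 1 else 0) with hψlowdef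
  set ψup : EuclideanSpace ℝ (Fin 2) → ℝ := fun u => (b u ^ 2 + c) * b u ^ 2 with hψupdef
  have hψlow0 : ∀ u, 0 ≤ ψlow u := by
    intro u
    refine mul_nonneg (mul_nonneg (le_max_right _ _) (sq_nonneg _)) ?_
    split <;> norm_num
  have hψup0 : ∀ u, 0 ≤ ψup u := fun u =>
    mul_nonneg (add_nonneg (sq_nonneg _) hc) (sq_nonneg _)
  have hψlowm : Measurable ψlow := by
    refine Measurable.mul (Measurable.mul ?_ (hbmeas.pow_const 2)) ?_
    · exact ((hbmeas.pow_const 2).sub measurable_const).max measurable_const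
    · exact Measurable.ite (measurableSet_le measurable_const (hbmeas.pow_const 2))
        measurable_const measurable_const
  have hψupm : Measurable ψup :=
    ((hbmeas.pow_const 2).add measurable_const).mul (hbmeas.pow_const 2)
  set Φlow : EuclideanSpace ℝ (Fin 2) → ℝ≥0∞ :=
    fun y => ENNReal.ofReal (k * ψlow (r⁻¹ • y)) with hΦlowdef
  set Φup : EuclideanSpace ℝ (Fin 2) → ℝ≥0∞ :=
    fun y => ENNReal.ofReal (k * ψup (r⁻¹ • y)) with hΦupdef
  have hΦlowm : Measurable Φlow :=
    ENNReal.measurable_ofReal.comp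
      ((hψlowm.comp (measurable_const_smul _)).const_mul k)
  have hΦupm : Measurable Φup :=
    ENNReal.measurable_ofReal.comp
      ((hψupm.comp (measurable_const_smul _)).const_mul k)
  -- key Lipschitz estimate on the support of U
  have hkey : ∀ (z : ℝ) (x y : EuclideanSpace ℝ (Fin 2)),
      U (Real.sqrt (dist x y ^ 2 + z ^ 2)) ≠ 0 →
        |b (r⁻¹ • x) ^ 2 - b (r⁻¹ • y) ^ 2| ≤ c := by
    intro z x y hu
    have hsR : Real.sqrt (dist x y ^ 2 + z ^ 2) ≤ R := by
      by_contra h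
      exact hu (hUsupp _ (lt_of_not_ge h))
    have hdist : dist x y ≤ R := by
      have h' : Real.sqrt (dist x y ^ 2) ≤ Real.sqrt (dist x y ^ 2 + z ^ 2) :=
        Real.sqrt_le_sqrt (by nlinarith [sq_nonneg z])
      rw [Real.sqrt_sq dist_nonneg] at h'
      exact le_trans h' hsR
    have hd2 : dist (r⁻¹ • x) (r⁻¹ • y) = r⁻¹ * dist x y := by
      rw [dist_smul₀]
      congr 1
      rw [Real.norm_eq_abs, abs_of_nonneg (by positivity)]
    calc |b (r⁻¹ • x) ^ 2 - b (r⁻¹ • y) ^ 2| ≤ L * dist (r⁻¹ • x) (r⁻¹ • y) := hlip _ _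
      _ = L * (r⁻¹ * dist x y) := by rw [hd2]
      _ ≤ L * (r⁻¹ * R) := by
          refine mul_le_mul_of_nonneg_left ?_ hL
          exact mul_le_mul_of_nonneg_left hdist (by positivity)
      _ = c := by rw [hcdef]; field_simp
  -- pointwise lower bound
  have hlow : ∀ (z : ℝ) (x y : EuclideanSpace ℝ (Fin 2)),
      Φlow y * ENNReal.ofReal (U (Real.sqrt (dist x y ^ 2 + z ^ 2)))
        ≤ ENNReal.ofReal (F z x y) := by
    intro z x y
    rw [hΦlowdef]
    rw [← ENNReal.ofReal_mul (mul_nonneg hk0 (hψlow0 _))]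
    refine ENNReal.ofReal_le_ofReal ?_
    rcases eq_or_ne (U (Real.sqrt (dist x y ^ 2 + z ^ 2))) 0 with hu | hu
    · rw [hu, mul_zero, hFdef]
      exact hF0 z x y
    · have habs := hkey z x y hu
      have hUs : 0 ≤ U (Real.sqrt (dist x y ^ 2 + z ^ 2)) := hU0 _
      rw [hψlowdef, hFdef]
      by_cases hδy : δ ≤ b (r⁻¹ • y) ^ 2
      · simp only [if_pos hδy]
        have hmax : max (b (r⁻¹ • y) ^ 2 - c) 0 ≤ b (r⁻¹ • x) ^ 2 := by
          refine max_le ?_ (sq_nonneg _)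
          have := abs_le.1 habs
          linarith [this.2]
        calc k * (max (b (r⁻¹ • y) ^ 2 - c) 0 * b (r⁻¹ • y) ^ 2 * 1) *
              U (Real.sqrt (dist x y ^ 2 + z ^ 2))
            = max (b (r⁻¹ • y) ^ 2 - c) 0 *
              (k * b (r⁻¹ • y) ^ 2 * U (Real.sqrt (dist x y ^ 2 + z ^ 2))) := by ring
          _ ≤ b (r⁻¹ • x) ^ 2 *
              (k * b (r⁻¹ • y) ^ 2 * U (Real.sqrt (dist x y ^ 2 + z ^ 2))) := by
              refine mul_le_mul_of_nonneg_right hmax ?_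
              have : (0:ℝ) ≤ k * b (r⁻¹ • y) ^ 2 := mul_nonneg hk0 (sq_nonneg _)
              exact mul_nonneg this hUs
          _ = (r⁻¹ * b (r⁻¹ • x)) ^ 2 * (r⁻¹ * b (r⁻¹ • y)) ^ 2 *
              U (Real.sqrt (dist x y ^ 2 + z ^ 2)) * 1 := by rw [hkdef]; ring
      · simp only [if_neg hδy]
        rw [mul_zero, mul_zero, mul_zero, zero_mul]
  -- pointwise upper bound
  have hup : ∀ (z : ℝ) (x y : EuclideanSpace ℝ (Fin 2)),
      ENNReal.ofReal (F z x y)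
        ≤ Φup y * ENNReal.ofReal (U (Real.sqrt (dist x y ^ 2 + z ^ 2))) := by
    intro z x y
    rw [hΦupdef]
    rw [← ENNReal.ofReal_mul (mul_nonneg hk0 (hψup0 _))]
    refine ENNReal.ofReal_le_ofReal ?_
    rcases eq_or_ne (U (Real.sqrt (dist x y ^ 2 + z ^ 2))) 0 with hu | hu
    · rw [hFdef]
      simp only [hu, mul_zero, zero_mul]
      exact le_rfl
    · have habs := hkey z x y hu
      have hUs : 0 ≤ U (Real.sqrt (dist x y ^ 2 + z ^ 2)) := hU0 _
      have hbx : b (r⁻¹ • x) ^ 2 ≤ b (r⁻¹ • y) ^ 2 + c := by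
        have := abs_le.1 habs
        linarith [this.1, this.2]
      have hχ1 : (if δ ≤ b (r⁻¹ • y) ^ 2 then (1:ℝ) else 0) ≤ 1 := by
        split <;> norm_num
      have hχ0 : (0:ℝ) ≤ (if δ ≤ b (r⁻¹ • y) ^ 2 then (1:ℝ) else 0) := by
        split <;> norm_num
      rw [hFdef, hψupdef]
      calc (r⁻¹ * b (r⁻¹ • x)) ^ 2 * (r⁻¹ * b (r⁻¹ • y)) ^ 2 *
            U (Real.sqrt (dist x y ^ 2 + z ^ 2)) *
            (if δ ≤ b (r⁻¹ • y) ^ 2 then (1:ℝ) else 0)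
          ≤ (r⁻¹ * b (r⁻¹ • x)) ^ 2 * (r⁻¹ * b (r⁻¹ • y)) ^ 2 *
            U (Real.sqrt (dist x y ^ 2 + z ^ 2)) * 1 := by
            refine mul_le_mul_of_nonneg_left hχ1 ?_
            exact mul_nonneg (mul_nonneg (sq_nonneg _) (sq_nonneg _)) hUs
        _ = b (r⁻¹ • x) ^ 2 * (k * b (r⁻¹ • y) ^ 2 *
              U (Real.sqrt (dist x y ^ 2 + z ^ 2))) := by rw [hkdef]; ring
        _ ≤ (b (r⁻¹ • y) ^ 2 + c) * (k * b (r⁻¹ • y) ^ 2 *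
              U (Real.sqrt (dist x y ^ 2 + z ^ 2))) := by
            refine mul_le_mul_of_nonneg_right hbx ?_
            exact mul_nonneg (mul_nonneg hk0 (sq_nonneg _)) hUs
        _ = k * ((b (r⁻¹ • y) ^ 2 + c) * b (r⁻¹ • y) ^ 2) *
              U (Real.sqrt (dist x y ^ 2 + z ^ 2)) := by ring
  -- the 3d integral of U
  have hJ : (∫⁻ w : EuclideanSpace ℝ (Fin 3), ENNReal.ofReal (U ‖w‖))
      = ENNReal.ofReal (4 * π) := by
    have hUi : Integrable fun w : EuclideanSpace ℝ (Fin 3) => U ‖w‖ := by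
      by_contra h
      rw [integral_undef h] at hUint
      nlinarith
    rw [← ofReal_integral_eq_lintegral_ofReal hUi (ae_of_all _ fun w => hU0 _), hUint]
  -- scaling
  have hmlow : Measurable fun u : EuclideanSpace ℝ (Fin 2) => ENNReal.ofReal (k * ψlow u) :=
    ENNReal.measurable_ofReal.comp (hψlowm.const_mul k)
  have hmup : Measurable fun u : EuclideanSpace ℝ (Fin 2) => ENNReal.ofReal (k * ψup u) :=
    ENNReal.measurable_ofReal.comp (hψupm.const_mul k)
  have hΦlow_eq : (∫⁻ y, Φlow y)
      = ENNReal.ofReal (r ^ 2) * ∫⁻ u, ENNReal.ofReal (k * ψlow u) :=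
    scaling2d (fun u => ENNReal.ofReal (k * ψlow u)) hmlow hr
  have hΦup_eq : (∫⁻ y, Φup y)
      = ENNReal.ofReal (r ^ 2) * ∫⁻ u, ENNReal.ofReal (k * ψup u) :=
    scaling2d (fun u => ENNReal.ofReal (k * ψup u)) hmup hr
  -- integrability of ψup and finiteness
  have hψup_int : Integrable ψup := by
    have he : ψup = fun u => b u ^ 4 + c * b u ^ 2 := funext fun u => by
      rw [hψupdef]; ring
    rw [he]
    exact hb4.add (hi2.const_mul c)
  have hup_fin : (∫⁻ u, ENNReal.ofReal (k * ψup u)) ≠ ⊤ := by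
    rw [← ofReal_integral_eq_lintegral_ofReal (hψup_int.const_mul k)
      (ae_of_all _ fun u => mul_nonneg hk0 (hψup0 u))]
    exact ENNReal.ofReal_ne_top
  have hIup : (∫⁻ z, ∫⁻ x, ∫⁻ y, ENNReal.ofReal (F z x y))
      ≤ (∫⁻ y, Φup y) * ∫⁻ w : EuclideanSpace ℝ (Fin 3), ENNReal.ofReal (U ‖w‖) := by
    rw [← kernel_eval U hUmeas Φup hΦupm]
    exact lintegral_mono fun z => lintegral_mono fun x => lintegral_mono fun y => hup z x y
  have hItop : (∫⁻ z, ∫⁻ x, ∫⁻ y, ENNReal.ofReal (F z x y)) ≠ ⊤ := by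
    refine ne_top_of_le_ne_top ?_ hIup
    rw [hΦup_eq, hJ]
    exact ENNReal.mul_ne_top (ENNReal.mul_ne_top ENNReal.ofReal_ne_top hup_fin)
      ENNReal.ofReal_ne_top
  have hIlow : (∫⁻ y, Φlow y) * (∫⁻ w : EuclideanSpace ℝ (Fin 3), ENNReal.ofReal (U ‖w‖))
      ≤ ∫⁻ z, ∫⁻ x, ∫⁻ y, ENNReal.ofReal (F z x y) := by
    rw [← kernel_eval U hUmeas Φlow hΦlowm]
    exact lintegral_mono fun z => lintegral_mono fun x => lintegral_mono fun y => hlow z x y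
  -- lower bound for the ψlow integral
  have hT' : 0 < (∫ x, b x ^ 4) - (δ + c) := by linarith
  have hψ'_int : Integrable (fun u : EuclideanSpace ℝ (Fin 2) =>
      b u ^ 4 - (δ + c) * b u ^ 2) := hb4.sub (hi2.const_mul _)
  have hψ'_val : (∫ u : EuclideanSpace ℝ (Fin 2), (b u ^ 4 - (δ + c) * b u ^ 2))
      = (∫ x, b x ^ 4) - (δ + c) := by
    rw [integral_sub hb4 (hi2.const_mul _), integral_const_mul, hb2, mul_one]
  have hmax_int : Integrable (fun u : EuclideanSpace ℝ (Fin 2) =>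
      max (b u ^ 4 - (δ + c) * b u ^ 2) 0) := hψ'_int.pos_part
  have hpt : ∀ u, max (b u ^ 4 - (δ + c) * b u ^ 2) 0 ≤ ψlow u := by
    intro u
    rw [hψlowdef]
    by_cases hδu : δ ≤ b u ^ 2
    · simp only [if_pos hδu, mul_one]
      refine max_le ?_ (mul_nonneg (le_max_right _ _) (sq_nonneg _))
      have h1 : b u ^ 2 - c ≤ max (b u ^ 2 - c) 0 := le_max_left _ _
      nlinarith [sq_nonneg (b u ^ 2), hδ.le, hδu, sq_nonneg (b u)]
    · simp only [if_neg hδu, mul_zero]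
      refine max_le ?_ le_rfl
      nlinarith [sq_nonneg (b u), hc, not_le.1 hδu, hδ.le]
  have hlow_int : ENNReal.ofReal ((∫ x, b x ^ 4) - (δ + c))
      ≤ ∫⁻ u, ENNReal.ofReal (ψlow u) := by
    calc ENNReal.ofReal ((∫ x, b x ^ 4) - (δ + c))
        = ENNReal.ofReal (∫ u : EuclideanSpace ℝ (Fin 2),
            (b u ^ 4 - (δ + c) * b u ^ 2)) := by rw [hψ'_val]
      _ ≤ ENNReal.ofReal (∫ u : EuclideanSpace ℝ (Fin 2),
            max (b u ^ 4 - (δ + c) * b u ^ 2) 0) := by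
          refine ENNReal.ofReal_le_ofReal ?_
          exact integral_mono hψ'_int hmax_int fun u => le_max_left _ _
      _ = ∫⁻ u, ENNReal.ofReal (max (b u ^ 4 - (δ + c) * b u ^ 2) 0) :=
          ofReal_integral_eq_lintegral_ofReal hmax_int (ae_of_all _ fun u => le_max_right _ _)
      _ ≤ ∫⁻ u, ENNReal.ofReal (ψlow u) :=
          lintegral_mono fun u => ENNReal.ofReal_le_ofReal (hpt u)
  have hklow : ENNReal.ofReal k * ENNReal.ofReal ((∫ x, b x ^ 4) - (δ + c))
      ≤ ∫⁻ u, ENNReal.ofReal (k * ψlow u) := by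
    have : (∫⁻ u, ENNReal.ofReal (k * ψlow u))
        = ENNReal.ofReal k * ∫⁻ u, ENNReal.ofReal (ψlow u) := by
      simp_rw [ENNReal.ofReal_mul hk0]
      exact lintegral_const_mul _ (ENNReal.measurable_ofReal.comp hψlowm)
    rw [this]
    exact mul_le_mul_right hlow_int _
  -- convert the Bochner integral
  have hconv : (∫ z, ∫ x, ∫ y, F z x y)
      = (∫⁻ z, ∫⁻ x, ∫⁻ y, ENNReal.ofReal (F z x y)).toReal :=
    triple_convert F hFm hF0 hItop
  rw [hconv]
  have h1 : 4 * π / r ^ 2 * ((∫ x, b x ^ 4) - δ - c)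
      = (ENNReal.ofReal (k * (r ^ 2 * (((∫ x, b x ^ 4) - (δ + c)) * (4 * π))))).toReal := by
    rw [ENNReal.toReal_ofReal (by positivity)]
    rw [hkdef]
    field_simp
    ring
  rw [h1]
  refine ENNReal.toReal_mono hItop ?_
  calc ENNReal.ofReal (k * (r ^ 2 * (((∫ x, b x ^ 4) - (δ + c)) * (4 * π))))
      = ENNReal.ofReal k * (ENNReal.ofReal (r ^ 2) *
          (ENNReal.ofReal ((∫ x, b x ^ 4) - (δ + c)) * ENNReal.ofReal (4 * π))) := by
        rw [ENNReal.ofReal_mul hk0, ENNReal.ofReal_mul (by positivity : (0:ℝ) ≤ r ^ 2),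
          ENNReal.ofReal_mul hT'.le]
    _ = ENNReal.ofReal (r ^ 2) *
          (ENNReal.ofReal k * ENNReal.ofReal ((∫ x, b x ^ 4) - (δ + c))) *
          ENNReal.ofReal (4 * π) := by ring
    _ ≤ ENNReal.ofReal (r ^ 2) * (∫⁻ u, ENNReal.ofReal (k * ψlow u)) *
          ENNReal.ofReal (4 * π) := by
        gcongr
    _ = (∫⁻ y, Φlow y) * ∫⁻ w : EuclideanSpace ℝ (Fin 3), ENNReal.ofReal (U ‖w‖) := by
        rw [hΦlow_eq, hJ]
    _ ≤ ∫⁻ z, ∫⁻ x, ∫⁻ y, ENNReal.ofReal (F z x y) := hIlow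
end
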